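/- Let q be the 8-dimensional Lie algebra over a field k of characteristic 0 defined by the structure constants below, and let n be the linear span of {a₁, b₁, u, a₂, b₂}. Then n is a Lie ideal of q, and its lower central series is: ⁅n,n⁆ = span{u, a₂, b₂}, ⁅n,⁅n,n⁆⁆ = span{a₂, b₂}, and ⁅n,⁅n,⁅n,n⁆⁆⁆ = 0. In particular, n is a 5-dimensional non-abelian nilpotent Lie algebra. -/

import Mathlib

/-- Structure constants of the 8-dimensional Lie algebra `q` with basis
`(e, h, f, a₁, b₁, u, a₂, b₂)` (indexed by `Fin 8` in this order):
`qStruct i j` is the coordinate vector of the bracket `⁅basisᵢ, basisⱼ⁆`.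
The only nonzero brackets of basis vectors (up to antisymmetry) are:
`⁅e,f⁆=h, ⁅h,e⁆=2e, ⁅h,f⁆=−2f, ⁅h,a₁⁆=a₁, ⁅h,b₁⁆=−b₁, ⁅e,b₁⁆=a₁, ⁅f,a₁⁆=b₁,
⁅h,a₂⁆=a₂, ⁅h,b₂⁆=−b₂, ⁅e,b₂⁆=a₂, ⁅f,a₂⁆=b₂, ⁅a₁,b₁⁆=u, ⁅a₁,u⁆=a₂, ⁅b₁,u⁆=b₂`. -/
def qStruct {k : Type*} [Field k] : Fin 8 → Fin 8 → Fin 8 → k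
  | 0, 2 => Pi.single 1 1       -- ⁅e,f⁆ = h
  | 2, 0 => Pi.single 1 (-1)
  | 1, 0 => Pi.single 0 2       -- ⁅h,e⁆ = 2e
  | 0, 1 => Pi.single 0 (-2)
  | 1, 2 => Pi.single 2 (-2)    -- ⁅h,f⁆ = -2f
  | 2, 1 => Pi.single 2 2
  | 1, 3 => Pi.single 3 1       -- ⁅h,a₁⁆ = a₁
  | 3, 1 => Pi.single 3 (-1)
  | 1, 4 => Pi.single 4 (-1)    -- ⁅h,b₁⁆ = -b₁
  | 4, 1 => Pi.single 4 1
  | 0, 4 => Pi.single 3 1       -- ⁅e,b₁⁆ = a₁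
  | 4, 0 => Pi.single 3 (-1)
  | 2, 3 => Pi.single 4 1       -- ⁅f,a₁⁆ = b₁
  | 3, 2 => Pi.single 4 (-1)
  | 1, 6 => Pi.single 6 1       -- ⁅h,a₂⁆ = a₂
  | 6, 1 => Pi.single 6 (-1)
  | 1, 7 => Pi.single 7 (-1)    -- ⁅h,b₂⁆ = -b₂
  | 7, 1 => Pi.single 7 1
  | 0, 7 => Pi.single 6 1       -- ⁅e,b₂⁆ = a₂
  | 7, 0 => Pi.single 6 (-1)
  | 2, 6 => Pi.single 7 1       -- ⁅f,a₂⁆ = b₂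
  | 6, 2 => Pi.single 7 (-1)
  | 3, 4 => Pi.single 5 1       -- ⁅a₁,b₁⁆ = u
  | 4, 3 => Pi.single 5 (-1)
  | 3, 5 => Pi.single 6 1       -- ⁅a₁,u⁆ = a₂
  | 5, 3 => Pi.single 6 (-1)
  | 4, 5 => Pi.single 7 1       -- ⁅b₁,u⁆ = b₂
  | 5, 4 => Pi.single 7 (-1)
  | _, _ => 0

/-- The alternating bilinear bracket on `k⁸` determined by the structure
constants `qStruct`. -/
def qBracket {k : Type*} [Field k] (x y : Fin 8 → k) : Fin 8 → k :=
  ∑ i : Fin 8, ∑ j : Fin 8, (x i * y j) • qStruct i j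


open Submodule in
/-- The span of all brackets `⁅x,y⁆` with `x ∈ A`, `y ∈ B`. -/
def brSpan {k : Type*} [Field k] (A B : Submodule k (Fin 8 → k)) :
    Submodule k (Fin 8 → k) :=
  Submodule.span k {z | ∃ x ∈ A, ∃ y ∈ B, z = qBracket x y}

/-- `n`, the span of `{a₁, b₁, u, a₂, b₂}` (basis indices `3,4,5,6,7`). -/
def nSub (k : Type*) [Field k] : Submodule k (Fin 8 → k) :=
  Submodule.span k
    {Pi.single 3 1, Pi.single 4 1, Pi.single 5 1, Pi.single 6 1, Pi.single 7 1}


section Aux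

variable {k : Type*} [Field k]
lemma qs00 : qStruct (k:=k) 0 0 = (0 : Fin 8 → k) := rfl
lemma qs01 : qStruct (k:=k) 0 1 = (Pi.single 0 (-2) : Fin 8 → k) := rfl
lemma qs02 : qStruct (k:=k) 0 2 = (Pi.single 1 1 : Fin 8 → k) := rfl
lemma qs03 : qStruct (k:=k) 0 3 = (0 : Fin 8 → k) := rfl
lemma qs04 : qStruct (k:=k) 0 4 = (Pi.single 3 1 : Fin 8 → k) := rfl
lemma qs05 : qStruct (k:=k) 0 5 = (0 : Fin 8 → k) := rfl
lemma qs06 : qStruct (k:=k) 0 6 = (0 : Fin 8 → k) := rfl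
lemma qs07 : qStruct (k:=k) 0 7 = (Pi.single 6 1 : Fin 8 → k) := rfl
lemma qs10 : qStruct (k:=k) 1 0 = (Pi.single 0 2 : Fin 8 → k) := rfl
lemma qs11 : qStruct (k:=k) 1 1 = (0 : Fin 8 → k) := rfl
lemma qs12 : qStruct (k:=k) 1 2 = (Pi.single 2 (-2) : Fin 8 → k) := rfl
lemma qs13 : qStruct (k:=k) 1 3 = (Pi.single 3 1 : Fin 8 → k) := rfl
lemma qs14 : qStruct (k:=k) 1 4 = (Pi.single 4 (-1) : Fin 8 → k) := rfl
lemma qs15 : qStruct (k:=k) 1 5 = (0 : Fin 8 → k) := rfl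
lemma qs16 : qStruct (k:=k) 1 6 = (Pi.single 6 1 : Fin 8 → k) := rfl
lemma qs17 : qStruct (k:=k) 1 7 = (Pi.single 7 (-1) : Fin 8 → k) := rfl
lemma qs20 : qStruct (k:=k) 2 0 = (Pi.single 1 (-1) : Fin 8 → k) := rfl
lemma qs21 : qStruct (k:=k) 2 1 = (Pi.single 2 2 : Fin 8 → k) := rfl
lemma qs22 : qStruct (k:=k) 2 2 = (0 : Fin 8 → k) := rfl
lemma qs23 : qStruct (k:=k) 2 3 = (Pi.single 4 1 : Fin 8 → k) := rfl
lemma qs24 : qStruct (k:=k) 2 4 = (0 : Fin 8 → k) := rfl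
lemma qs25 : qStruct (k:=k) 2 5 = (0 : Fin 8 → k) := rfl
lemma qs26 : qStruct (k:=k) 2 6 = (Pi.single 7 1 : Fin 8 → k) := rfl
lemma qs27 : qStruct (k:=k) 2 7 = (0 : Fin 8 → k) := rfl
lemma qs30 : qStruct (k:=k) 3 0 = (0 : Fin 8 → k) := rfl
lemma qs31 : qStruct (k:=k) 3 1 = (Pi.single 3 (-1) : Fin 8 → k) := rfl
lemma qs32 : qStruct (k:=k) 3 2 = (Pi.single 4 (-1) : Fin 8 → k) := rfl
lemma qs33 : qStruct (k:=k) 3 3 = (0 : Fin 8 → k) := rfl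
lemma qs34 : qStruct (k:=k) 3 4 = (Pi.single 5 1 : Fin 8 → k) := rfl
lemma qs35 : qStruct (k:=k) 3 5 = (Pi.single 6 1 : Fin 8 → k) := rfl
lemma qs36 : qStruct (k:=k) 3 6 = (0 : Fin 8 → k) := rfl
lemma qs37 : qStruct (k:=k) 3 7 = (0 : Fin 8 → k) := rfl
lemma qs40 : qStruct (k:=k) 4 0 = (Pi.single 3 (-1) : Fin 8 → k) := rfl
lemma qs41 : qStruct (k:=k) 4 1 = (Pi.single 4 1 : Fin 8 → k) := rfl
lemma qs42 : qStruct (k:=k) 4 2 = (0 : Fin 8 → k) := rfl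
lemma qs43 : qStruct (k:=k) 4 3 = (Pi.single 5 (-1) : Fin 8 → k) := rfl
lemma qs44 : qStruct (k:=k) 4 4 = (0 : Fin 8 → k) := rfl
lemma qs45 : qStruct (k:=k) 4 5 = (Pi.single 7 1 : Fin 8 → k) := rfl
lemma qs46 : qStruct (k:=k) 4 6 = (0 : Fin 8 → k) := rfl
lemma qs47 : qStruct (k:=k) 4 7 = (0 : Fin 8 → k) := rfl
lemma qs50 : qStruct (k:=k) 5 0 = (0 : Fin 8 → k) := rfl
lemma qs51 : qStruct (k:=k) 5 1 = (0 : Fin 8 → k) := rfl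
lemma qs52 : qStruct (k:=k) 5 2 = (0 : Fin 8 → k) := rfl
lemma qs53 : qStruct (k:=k) 5 3 = (Pi.single 6 (-1) : Fin 8 → k) := rfl
lemma qs54 : qStruct (k:=k) 5 4 = (Pi.single 7 (-1) : Fin 8 → k) := rfl
lemma qs55 : qStruct (k:=k) 5 5 = (0 : Fin 8 → k) := rfl
lemma qs56 : qStruct (k:=k) 5 6 = (0 : Fin 8 → k) := rfl
lemma qs57 : qStruct (k:=k) 5 7 = (0 : Fin 8 → k) := rfl
lemma qs60 : qStruct (k:=k) 6 0 = (0 : Fin 8 → k) := rfl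
lemma qs61 : qStruct (k:=k) 6 1 = (Pi.single 6 (-1) : Fin 8 → k) := rfl
lemma qs62 : qStruct (k:=k) 6 2 = (Pi.single 7 (-1) : Fin 8 → k) := rfl
lemma qs63 : qStruct (k:=k) 6 3 = (0 : Fin 8 → k) := rfl
lemma qs64 : qStruct (k:=k) 6 4 = (0 : Fin 8 → k) := rfl
lemma qs65 : qStruct (k:=k) 6 5 = (0 : Fin 8 → k) := rfl
lemma qs66 : qStruct (k:=k) 6 6 = (0 : Fin 8 → k) := rfl
lemma qs67 : qStruct (k:=k) 6 7 = (0 : Fin 8 → k) := rfl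
lemma qs70 : qStruct (k:=k) 7 0 = (Pi.single 6 (-1) : Fin 8 → k) := rfl
lemma qs71 : qStruct (k:=k) 7 1 = (Pi.single 7 1 : Fin 8 → k) := rfl
lemma qs72 : qStruct (k:=k) 7 2 = (0 : Fin 8 → k) := rfl
lemma qs73 : qStruct (k:=k) 7 3 = (0 : Fin 8 → k) := rfl
lemma qs74 : qStruct (k:=k) 7 4 = (0 : Fin 8 → k) := rfl
lemma qs75 : qStruct (k:=k) 7 5 = (0 : Fin 8 → k) := rfl
lemma qs76 : qStruct (k:=k) 7 6 = (0 : Fin 8 → k) := rfl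
lemma qs77 : qStruct (k:=k) 7 7 = (0 : Fin 8 → k) := rfl

lemma qb0 (x y : Fin 8 → k) : qBracket x y 0 = 2*x 1*y 0 - 2*x 0*y 1 := by
  simp only [qBracket, Fin.sum_univ_eight, qs00, qs01, qs02, qs03, qs04, qs05, qs06, qs07, qs10, qs11, qs12, qs13, qs14, qs15, qs16, qs17, qs20, qs21, qs22, qs23, qs24, qs25, qs26, qs27, qs30, qs31, qs32, qs33, qs34, qs35, qs36, qs37, qs40, qs41, qs42, qs43, qs44, qs45, qs46, qs47, qs50, qs51, qs52, qs53, qs54, qs55, qs56, qs57, qs60, qs61, qs62, qs63, qs64, qs65, qs66, qs67, qs70, qs71, qs72, qs73, qs74, qs75, qs76, qs77]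
  simp [Pi.single_apply]; ring

lemma qb1 (x y : Fin 8 → k) : qBracket x y 1 = x 0*y 2 - x 2*y 0 := by
  simp only [qBracket, Fin.sum_univ_eight, qs00, qs01, qs02, qs03, qs04, qs05, qs06, qs07, qs10, qs11, qs12, qs13, qs14, qs15, qs16, qs17, qs20, qs21, qs22, qs23, qs24, qs25, qs26, qs27, qs30, qs31, qs32, qs33, qs34, qs35, qs36, qs37, qs40, qs41, qs42, qs43, qs44, qs45, qs46, qs47, qs50, qs51, qs52, qs53, qs54, qs55, qs56, qs57, qs60, qs61, qs62, qs63, qs64, qs65, qs66, qs67, qs70, qs71, qs72, qs73, qs74, qs75, qs76, qs77]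
  simp [Pi.single_apply]; ring

lemma qb2 (x y : Fin 8 → k) : qBracket x y 2 = 2*x 2*y 1 - 2*x 1*y 2 := by
  simp only [qBracket, Fin.sum_univ_eight, qs00, qs01, qs02, qs03, qs04, qs05, qs06, qs07, qs10, qs11, qs12, qs13, qs14, qs15, qs16, qs17, qs20, qs21, qs22, qs23, qs24, qs25, qs26, qs27, qs30, qs31, qs32, qs33, qs34, qs35, qs36, qs37, qs40, qs41, qs42, qs43, qs44, qs45, qs46, qs47, qs50, qs51, qs52, qs53, qs54, qs55, qs56, qs57, qs60, qs61, qs62, qs63, qs64, qs65, qs66, qs67, qs70, qs71, qs72, qs73, qs74, qs75, qs76, qs77]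
  simp [Pi.single_apply]; ring

lemma qb3 (x y : Fin 8 → k) : qBracket x y 3 = x 1*y 3 - x 3*y 1 + x 0*y 4 - x 4*y 0 := by
  simp only [qBracket, Fin.sum_univ_eight, qs00, qs01, qs02, qs03, qs04, qs05, qs06, qs07, qs10, qs11, qs12, qs13, qs14, qs15, qs16, qs17, qs20, qs21, qs22, qs23, qs24, qs25, qs26, qs27, qs30, qs31, qs32, qs33, qs34, qs35, qs36, qs37, qs40, qs41, qs42, qs43, qs44, qs45, qs46, qs47, qs50, qs51, qs52, qs53, qs54, qs55, qs56, qs57, qs60, qs61, qs62, qs63, qs64, qs65, qs66, qs67, qs70, qs71, qs72, qs73, qs74, qs75, qs76, qs77]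
  simp [Pi.single_apply]; ring

lemma qb4 (x y : Fin 8 → k) : qBracket x y 4 = x 4*y 1 - x 1*y 4 + x 2*y 3 - x 3*y 2 := by
  simp only [qBracket, Fin.sum_univ_eight, qs00, qs01, qs02, qs03, qs04, qs05, qs06, qs07, qs10, qs11, qs12, qs13, qs14, qs15, qs16, qs17, qs20, qs21, qs22, qs23, qs24, qs25, qs26, qs27, qs30, qs31, qs32, qs33, qs34, qs35, qs36, qs37, qs40, qs41, qs42, qs43, qs44, qs45, qs46, qs47, qs50, qs51, qs52, qs53, qs54, qs55, qs56, qs57, qs60, qs61, qs62, qs63, qs64, qs65, qs66, qs67, qs70, qs71, qs72, qs73, qs74, qs75, qs76, qs77]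
  simp [Pi.single_apply]; ring

lemma qb5 (x y : Fin 8 → k) : qBracket x y 5 = x 3*y 4 - x 4*y 3 := by
  simp only [qBracket, Fin.sum_univ_eight, qs00, qs01, qs02, qs03, qs04, qs05, qs06, qs07, qs10, qs11, qs12, qs13, qs14, qs15, qs16, qs17, qs20, qs21, qs22, qs23, qs24, qs25, qs26, qs27, qs30, qs31, qs32, qs33, qs34, qs35, qs36, qs37, qs40, qs41, qs42, qs43, qs44, qs45, qs46, qs47, qs50, qs51, qs52, qs53, qs54, qs55, qs56, qs57, qs60, qs61, qs62, qs63, qs64, qs65, qs66, qs67, qs70, qs71, qs72, qs73, qs74, qs75, qs76, qs77]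
  simp [Pi.single_apply]; ring

lemma qb6 (x y : Fin 8 → k) : qBracket x y 6 = x 1*y 6 - x 6*y 1 + x 0*y 7 - x 7*y 0 + x 3*y 5 - x 5*y 3 := by
  simp only [qBracket, Fin.sum_univ_eight, qs00, qs01, qs02, qs03, qs04, qs05, qs06, qs07, qs10, qs11, qs12, qs13, qs14, qs15, qs16, qs17, qs20, qs21, qs22, qs23, qs24, qs25, qs26, qs27, qs30, qs31, qs32, qs33, qs34, qs35, qs36, qs37, qs40, qs41, qs42, qs43, qs44, qs45, qs46, qs47, qs50, qs51, qs52, qs53, qs54, qs55, qs56, qs57, qs60, qs61, qs62, qs63, qs64, qs65, qs66, qs67, qs70, qs71, qs72, qs73, qs74, qs75, qs76, qs77]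
  simp [Pi.single_apply]; ring

lemma qb7 (x y : Fin 8 → k) : qBracket x y 7 = x 7*y 1 - x 1*y 7 + x 2*y 6 - x 6*y 2 + x 4*y 5 - x 5*y 4 := by
  simp only [qBracket, Fin.sum_univ_eight, qs00, qs01, qs02, qs03, qs04, qs05, qs06, qs07, qs10, qs11, qs12, qs13, qs14, qs15, qs16, qs17, qs20, qs21, qs22, qs23, qs24, qs25, qs26, qs27, qs30, qs31, qs32, qs33, qs34, qs35, qs36, qs37, qs40, qs41, qs42, qs43, qs44, qs45, qs46, qs47, qs50, qs51, qs52, qs53, qs54, qs55, qs56, qs57, qs60, qs61, qs62, qs63, qs64, qs65, qs66, qs67, qs70, qs71, qs72, qs73, qs74, qs75, qs76, qs77]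
  simp [Pi.single_apply]; ring


lemma br34 : qBracket (Pi.single 3 1 : Fin 8 → k) (Pi.single 4 1) = Pi.single 5 1 := by
  simp only [qBracket, Fin.sum_univ_eight, qs00, qs01, qs02, qs03, qs04, qs05, qs06, qs07, qs10, qs11, qs12, qs13, qs14, qs15, qs16, qs17, qs20, qs21, qs22, qs23, qs24, qs25, qs26, qs27, qs30, qs31, qs32, qs33, qs34, qs35, qs36, qs37, qs40, qs41, qs42, qs43, qs44, qs45, qs46, qs47, qs50, qs51, qs52, qs53, qs54, qs55, qs56, qs57, qs60, qs61, qs62, qs63, qs64, qs65, qs66, qs67, qs70, qs71, qs72, qs73, qs74, qs75, qs76, qs77]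
  simp [Pi.single_apply]

lemma br35 : qBracket (Pi.single 3 1 : Fin 8 → k) (Pi.single 5 1) = Pi.single 6 1 := by
  simp only [qBracket, Fin.sum_univ_eight, qs00, qs01, qs02, qs03, qs04, qs05, qs06, qs07, qs10, qs11, qs12, qs13, qs14, qs15, qs16, qs17, qs20, qs21, qs22, qs23, qs24, qs25, qs26, qs27, qs30, qs31, qs32, qs33, qs34, qs35, qs36, qs37, qs40, qs41, qs42, qs43, qs44, qs45, qs46, qs47, qs50, qs51, qs52, qs53, qs54, qs55, qs56, qs57, qs60, qs61, qs62, qs63, qs64, qs65, qs66, qs67, qs70, qs71, qs72, qs73, qs74, qs75, qs76, qs77]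
  simp [Pi.single_apply]

lemma br45 : qBracket (Pi.single 4 1 : Fin 8 → k) (Pi.single 5 1) = Pi.single 7 1 := by
  simp only [qBracket, Fin.sum_univ_eight, qs00, qs01, qs02, qs03, qs04, qs05, qs06, qs07, qs10, qs11, qs12, qs13, qs14, qs15, qs16, qs17, qs20, qs21, qs22, qs23, qs24, qs25, qs26, qs27, qs30, qs31, qs32, qs33, qs34, qs35, qs36, qs37, qs40, qs41, qs42, qs43, qs44, qs45, qs46, qs47, qs50, qs51, qs52, qs53, qs54, qs55, qs56, qs57, qs60, qs61, qs62, qs63, qs64, qs65, qs66, qs67, qs70, qs71, qs72, qs73, qs74, qs75, qs76, qs77]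
  simp [Pi.single_apply]

lemma mem_nSub_iff (x : Fin 8 → k) :
    x ∈ nSub k ↔ x 0 = 0 ∧ x 1 = 0 ∧ x 2 = 0 := by
  constructor
  · intro hx
    induction hx using Submodule.span_induction with
    | mem z hz =>
        simp only [Set.mem_insert_iff, Set.mem_singleton_iff] at hz
        rcases hz with rfl | rfl | rfl | rfl | rfl <;>
          refine ⟨?_, ?_, ?_⟩ <;> simp [Pi.single_apply]
    | zero => simp
    | add a b _ _ ha hb => exact ⟨by simp [ha.1, hb.1], by simp [ha.2.1, hb.2.1],
        by simp [ha.2.2, hb.2.2]⟩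
    | smul c a _ ha => exact ⟨by simp [ha.1], by simp [ha.2.1], by simp [ha.2.2]⟩
  · rintro ⟨h0, h1, h2⟩
    have hx : x = x 3 • (Pi.single 3 1 : Fin 8 → k) + x 4 • (Pi.single 4 1 : Fin 8 → k)
        + x 5 • (Pi.single 5 1 : Fin 8 → k) + x 6 • (Pi.single 6 1 : Fin 8 → k)
        + x 7 • (Pi.single 7 1 : Fin 8 → k) := by
      funext c; fin_cases c <;> simp [Pi.single_apply, h0, h1, h2]
    rw [hx]
    refine Submodule.add_mem _ (Submodule.add_mem _ (Submodule.add_mem _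
      (Submodule.add_mem _ ?_ ?_) ?_) ?_) ?_ <;>
      exact Submodule.smul_mem _ _ (Submodule.subset_span (by simp))

lemma mem_span567_iff (x : Fin 8 → k) :
    x ∈ Submodule.span k {(Pi.single 5 1 : Fin 8 → k), Pi.single 6 1, Pi.single 7 1} ↔
      x 0 = 0 ∧ x 1 = 0 ∧ x 2 = 0 ∧ x 3 = 0 ∧ x 4 = 0 := by
  constructor
  · intro hx
    induction hx using Submodule.span_induction with
    | mem z hz =>
        simp only [Set.mem_insert_iff, Set.mem_singleton_iff] at hz
        rcases hz with rfl | rfl | rfl <;>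
          refine ⟨?_, ?_, ?_, ?_, ?_⟩ <;> simp [Pi.single_apply]
    | zero => simp
    | add a b _ _ ha hb =>
        obtain ⟨a0,a1,a2,a3,a4⟩ := ha; obtain ⟨b0,b1,b2,b3,b4⟩ := hb
        exact ⟨by simp [a0,b0], by simp [a1,b1], by simp [a2,b2], by simp [a3,b3],
          by simp [a4,b4]⟩
    | smul c a _ ha =>
        obtain ⟨a0,a1,a2,a3,a4⟩ := ha
        exact ⟨by simp [a0], by simp [a1], by simp [a2], by simp [a3], by simp [a4]⟩
  · rintro ⟨h0, h1, h2, h3, h4⟩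
    have hx : x = x 5 • (Pi.single 5 1 : Fin 8 → k) + x 6 • (Pi.single 6 1 : Fin 8 → k)
        + x 7 • (Pi.single 7 1 : Fin 8 → k) := by
      funext c; fin_cases c <;> simp [Pi.single_apply, h0, h1, h2, h3, h4]
    rw [hx]
    refine Submodule.add_mem _ (Submodule.add_mem _ ?_ ?_) ?_ <;>
      exact Submodule.smul_mem _ _ (Submodule.subset_span (by simp))

lemma mem_span67_iff (x : Fin 8 → k) :
    x ∈ Submodule.span k {(Pi.single 6 1 : Fin 8 → k), Pi.single 7 1} ↔
      x 0 = 0 ∧ x 1 = 0 ∧ x 2 = 0 ∧ x 3 = 0 ∧ x 4 = 0 ∧ x 5 = 0 := by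
  constructor
  · intro hx
    induction hx using Submodule.span_induction with
    | mem z hz =>
        simp only [Set.mem_insert_iff, Set.mem_singleton_iff] at hz
        rcases hz with rfl | rfl <;>
          refine ⟨?_, ?_, ?_, ?_, ?_, ?_⟩ <;> simp [Pi.single_apply]
    | zero => simp
    | add a b _ _ ha hb =>
        obtain ⟨a0,a1,a2,a3,a4,a5⟩ := ha; obtain ⟨b0,b1,b2,b3,b4,b5⟩ := hb
        exact ⟨by simp [a0,b0], by simp [a1,b1], by simp [a2,b2], by simp [a3,b3],
          by simp [a4,b4], by simp [a5,b5]⟩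
    | smul c a _ ha =>
        obtain ⟨a0,a1,a2,a3,a4,a5⟩ := ha
        exact ⟨by simp [a0], by simp [a1], by simp [a2], by simp [a3], by simp [a4],
          by simp [a5]⟩
  · rintro ⟨h0, h1, h2, h3, h4, h5⟩
    have hx : x = x 6 • (Pi.single 6 1 : Fin 8 → k) + x 7 • (Pi.single 7 1 : Fin 8 → k) := by
      funext c; fin_cases c <;> simp [Pi.single_apply, h0, h1, h2, h3, h4, h5]
    rw [hx]
    exact Submodule.add_mem _ (Submodule.smul_mem _ _ (Submodule.subset_span (by simp)))
      (Submodule.smul_mem _ _ (Submodule.subset_span (by simp)))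

lemma single_li : LinearIndependent k (fun i : Fin 8 => (Pi.single i 1 : Fin 8 → k)) := by
  have h := (Pi.basisFun k (Fin 8)).linearIndependent
  have he : ⇑(Pi.basisFun k (Fin 8)) = fun i : Fin 8 => (Pi.single i 1 : Fin 8 → k) := by
    funext i
    simp [Pi.basisFun_apply]
  rwa [he] at h

lemma nSub_finrank : Module.finrank k (nSub k) = 5 := by
  have li5 : LinearIndependent k
      (fun i : Fin 5 => (Pi.single (⟨i.1 + 3, by omega⟩ : Fin 8) 1 : Fin 8 → k)) := by
    refine single_li.comp (fun i : Fin 5 => (⟨i.1 + 3, by omega⟩ : Fin 8)) ?_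
    intro a b h
    have := congrArg Fin.val h
    simp at this
    exact Fin.ext this
  have hset : Set.range
      (fun i : Fin 5 => (Pi.single (⟨i.1 + 3, by omega⟩ : Fin 8) 1 : Fin 8 → k)) =
      {Pi.single 3 1, Pi.single 4 1, Pi.single 5 1, Pi.single 6 1, Pi.single 7 1} := by
    ext z
    simp only [Set.mem_range, Set.mem_insert_iff, Set.mem_singleton_iff]
    constructor
    · rintro ⟨i, rfl⟩
      fin_cases i
      · exact Or.inl rfl
      · exact Or.inr (Or.inl rfl)
      · exact Or.inr (Or.inr (Or.inl rfl))
      · exact Or.inr (Or.inr (Or.inr (Or.inl rfl)))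
      · exact Or.inr (Or.inr (Or.inr (Or.inr rfl)))
    · rintro (rfl | rfl | rfl | rfl | rfl)
      exacts [⟨0, rfl⟩, ⟨1, rfl⟩, ⟨2, rfl⟩, ⟨3, rfl⟩, ⟨4, rfl⟩]
  have : nSub k = Submodule.span k (Set.range
      (fun i : Fin 5 => (Pi.single (⟨i.1 + 3, by omega⟩ : Fin 8) 1 : Fin 8 → k))) := by
    rw [hset]; rfl
  rw [this, finrank_span_eq_card li5]
  simp

lemma s3_mem : (Pi.single 3 1 : Fin 8 → k) ∈ nSub k := Submodule.subset_span (by simp)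
lemma s4_mem : (Pi.single 4 1 : Fin 8 → k) ∈ nSub k := Submodule.subset_span (by simp)
lemma s5_mem : (Pi.single 5 1 : Fin 8 → k) ∈ nSub k := Submodule.subset_span (by simp)

end Aux

/-- `n = span{a₁, b₁, u, a₂, b₂}` is a Lie ideal of `q`; its lower central series is
`⁅n,n⁆ = span{u, a₂, b₂}`, `⁅n,⁅n,n⁆⁆ = span{a₂, b₂}` and `⁅n,⁅n,⁅n,n⁆⁆⁆ = 0`.
In particular `n` is a 5-dimensional non-abelian nilpotent Lie algebra. -/
theorem nSub_ideal_lcs (k : Type*) [Field k] [CharZero k] :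
    -- n is an ideal of q
    (∀ x : Fin 8 → k, ∀ y ∈ nSub k, qBracket x y ∈ nSub k ∧ qBracket y x ∈ nSub k) ∧
    -- ⁅n,n⁆ = span{u, a₂, b₂}
    brSpan (nSub k) (nSub k) =
      Submodule.span k {Pi.single 5 1, Pi.single 6 1, Pi.single 7 1} ∧
    -- ⁅n,⁅n,n⁆⁆ = span{a₂, b₂}
    brSpan (nSub k) (brSpan (nSub k) (nSub k)) =
      Submodule.span k {Pi.single 6 1, Pi.single 7 1} ∧
    -- ⁅n,⁅n,⁅n,n⁆⁆⁆ = 0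
    brSpan (nSub k) (brSpan (nSub k) (brSpan (nSub k) (nSub k))) = ⊥ ∧
    -- n is 5-dimensional and non-abelian
    Module.finrank k (nSub k) = 5 ∧
    brSpan (nSub k) (nSub k) ≠ ⊥ := by
  have hideal : ∀ x : Fin 8 → k, ∀ y ∈ nSub k,
      qBracket x y ∈ nSub k ∧ qBracket y x ∈ nSub k := by
    intro x y hy
    rw [mem_nSub_iff] at hy
    obtain ⟨h0, h1, h2⟩ := hy
    constructor <;> rw [mem_nSub_iff] <;>
      exact ⟨by rw [qb0]; simp [h0, h1], by rw [qb1]; simp [h0, h2],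
        by rw [qb2]; simp [h1, h2]⟩
  have h2 : brSpan (nSub k) (nSub k) =
      Submodule.span k {(Pi.single 5 1 : Fin 8 → k), Pi.single 6 1, Pi.single 7 1} := by
    apply le_antisymm
    · rw [brSpan, Submodule.span_le]
      rintro z ⟨x, hx, y, hy, rfl⟩
      rw [mem_nSub_iff] at hx hy
      obtain ⟨x0, x1, x2⟩ := hx; obtain ⟨y0, y1, y2⟩ := hy
      rw [SetLike.mem_coe, mem_span567_iff]
      exact ⟨by rw [qb0]; simp [x0, y0], by rw [qb1]; simp [x0, y0],
        by rw [qb2]; simp [x1, y1], by rw [qb3]; simp [x0, x1, y0, y1],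
        by rw [qb4]; simp [x1, x2, y1, y2]⟩
    · rw [Submodule.span_le]
      rintro z hz
      simp only [Set.mem_insert_iff, Set.mem_singleton_iff] at hz
      rw [SetLike.mem_coe, brSpan]
      rcases hz with rfl | rfl | rfl
      · exact Submodule.subset_span ⟨_, s3_mem, _, s4_mem, br34.symm⟩
      · exact Submodule.subset_span ⟨_, s3_mem, _, s5_mem, br35.symm⟩
      · exact Submodule.subset_span ⟨_, s4_mem, _, s5_mem, br45.symm⟩
  have h3 : brSpan (nSub k) (brSpan (nSub k) (nSub k)) =
      Submodule.span k {(Pi.single 6 1 : Fin 8 → k), Pi.single 7 1} := by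
    rw [h2]
    apply le_antisymm
    · rw [brSpan, Submodule.span_le]
      rintro z ⟨x, hx, y, hy, rfl⟩
      rw [mem_nSub_iff] at hx
      rw [mem_span567_iff] at hy
      obtain ⟨x0, x1, x2⟩ := hx; obtain ⟨y0, y1, y2, y3, y4⟩ := hy
      rw [SetLike.mem_coe, mem_span67_iff]
      exact ⟨by rw [qb0]; simp [x0, y0], by rw [qb1]; simp [x0, y0],
        by rw [qb2]; simp [x1, y1], by rw [qb3]; simp [x0, x1, y0, y1],
        by rw [qb4]; simp [x1, x2, y1, y2], by rw [qb5]; simp [y3, y4]⟩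
    · rw [Submodule.span_le]
      rintro z hz
      simp only [Set.mem_insert_iff, Set.mem_singleton_iff] at hz
      rw [SetLike.mem_coe, brSpan]
      have h5 : (Pi.single 5 1 : Fin 8 → k) ∈
          Submodule.span k {(Pi.single 5 1 : Fin 8 → k), Pi.single 6 1, Pi.single 7 1} :=
        Submodule.subset_span (by simp)
      rcases hz with rfl | rfl
      · exact Submodule.subset_span ⟨_, s3_mem, _, h5, br35.symm⟩
      · exact Submodule.subset_span ⟨_, s4_mem, _, h5, br45.symm⟩
  have h4 : brSpan (nSub k) (brSpan (nSub k) (brSpan (nSub k) (nSub k))) = ⊥ := by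
    rw [h3, brSpan, Submodule.span_eq_bot]
    rintro z ⟨x, hx, y, hy, rfl⟩
    rw [mem_nSub_iff] at hx
    rw [mem_span67_iff] at hy
    obtain ⟨x0, x1, x2⟩ := hx; obtain ⟨y0, y1, y2, y3, y4, y5⟩ := hy
    funext c
    fin_cases c
    · show qBracket x y 0 = 0; rw [qb0]; simp [x0, y0]
    · show qBracket x y 1 = 0; rw [qb1]; simp [x0, y0]
    · show qBracket x y 2 = 0; rw [qb2]; simp [x1, y1]
    · show qBracket x y 3 = 0; rw [qb3]; simp [x0, x1, y0, y1]
    · show qBracket x y 4 = 0; rw [qb4]; simp [x1, x2, y1, y2]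
    · show qBracket x y 5 = 0; rw [qb5]; simp [y3, y4]
    · show qBracket x y 6 = 0; rw [qb6]; simp [x0, x1, y0, y1, y3, y5]
    · show qBracket x y 7 = 0; rw [qb7]; simp [x1, x2, y1, y2, y4, y5]
  refine ⟨hideal, h2, h3, h4, nSub_finrank, ?_⟩
  intro hbot
  rw [h2] at hbot
  have h5 : (Pi.single 5 1 : Fin 8 → k) ∈
      Submodule.span k {(Pi.single 5 1 : Fin 8 → k), Pi.single 6 1, Pi.single 7 1} :=
    Submodule.subset_span (by simp)
  rw [hbot, Submodule.mem_bot] at h5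
  have := congrFun h5 5
  simp at this
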